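/- Let (V, ⟨·,·⟩) be a finite-dimensional real inner product space, B and ψ symmetric endomorphisms with common orthonormal eigenbasis B Xᵢ = λ̄ᵢ Xᵢ, ψ Xᵢ = θᵢ Xᵢ, and define R(X,Y) = BX ∧ BY + ψX ∧ Y + X ∧ ψY with (X ∧ Y)Z = ⟨Y,Z⟩X − ⟨X,Z⟩Y. Then the following are equivalent: (a) for all i, j, k, l, ⟨R(Xᵢ,Xⱼ)X_k, X_l⟩·(λ̄_l − λ̄_k) = 0; (b) for all i ≠ j, (λ̄ᵢ − λ̄ⱼ)·(λ̄ᵢλ̄ⱼ + θᵢ + θⱼ) = 0. -/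
import Mathlib


open RealInnerProductSpace

noncomputable def wedge {V : Type*} [NormedAddCommGroup V] [InnerProductSpace ℝ V]
    (X Y Z : V) : V := ⟪Y, Z⟫ • X - ⟪X, Z⟫ • Y

theorem stmt_12 {V : Type*} [NormedAddCommGroup V] [InnerProductSpace ℝ V]
    [FiniteDimensional ℝ V] (n : ℕ)
    (e : OrthonormalBasis (Fin n) ℝ V)
    (B ψ : V →ₗ[ℝ] V) (hB : B.IsSymmetric) (hψ : ψ.IsSymmetric)
    (lam θ : Fin n → ℝ)
    (hBe : ∀ i, B (e i) = lam i • e i) (hψe : ∀ i, ψ (e i) = θ i • e i)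
    (R : V → V → V → V)
    (hR : ∀ x y z, R x y z = wedge (B x) (B y) z + wedge (ψ x) y z + wedge x (ψ y) z) :
    (∀ i j k l : Fin n, ⟪R (e i) (e j) (e k), e l⟫ * (lam l - lam k) = 0) ↔
    (∀ i j : Fin n, i ≠ j → (lam i - lam j) * (lam i * lam j + θ i + θ j) = 0) := by
  have key : ∀ i j : Fin n, ⟪e i, e j⟫ = if i = j then (1:ℝ) else 0 :=
    fun i j => orthonormal_iff_ite.mp e.orthonormal i j
  have hRe : ∀ i j k l : Fin n, ⟪R (e i) (e j) (e k), e l⟫ =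
      (lam i * lam j + θ i + θ j) *
        ((if j = k then (1:ℝ) else 0) * (if i = l then (1:ℝ) else 0) -
         (if i = k then (1:ℝ) else 0) * (if j = l then (1:ℝ) else 0)) := by
    intro i j k l
    rw [hR]
    simp only [wedge, hBe, hψe, inner_add_left, inner_sub_left, real_inner_smul_left,
      real_inner_smul_right, key]
    ring
  constructor
  · intro h i j hij
    have := h i j j i
    rw [hRe] at this
    simp [hij, (Ne.symm hij)] at this
    rcases this with h1 | h1
    · linear_combination (lam i - lam j) * h1
    · linear_combination (lam i * lam j + θ i + θ j) * h1
  · intro h i j k l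
    rw [hRe]
    rcases eq_or_ne i j with hij | hij
    · subst hij; ring
    · have hS := h i j hij
      split_ifs with h1 h2 h3 h4 <;>
        subst_vars <;>
        first
          | ring1
          | linear_combination hS
          | linear_combination -hS
          | exact absurd rfl hij
          | (exact absurd rfl (Ne.symm hij))
          | nlinarith [hS, sq_nonneg (lam i - lam j)]
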